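/- Suppose there are n ≥ 2 lenders each using an EO classifier with false-negative rate β∈(0,1), where on group 0 all lenders use the identical classifier (so P(all misclassify | group 0) = β) and on group 1 the misclassification events are mutually independent (so P(all misclassify | group 1) = βⁿ). Then the EOC level equals β - βⁿ, and this quantity is strictly increasing in n. -/

import Mathlib

/-- With `n ≥ 2` lenders, identical classifier on group 0 (all misclassify with
probability β) and independent errors on group 1 (all misclassify with
probability βⁿ), the EOC level is `β - βⁿ`, strictly increasing in `n`. -/
theorem stmt10 (n : ℕ) (hn : 2 ≤ n) (β : ℝ) (hβ : β ∈ Set.Ioo (0:ℝ) 1)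
    (p0 p1 : ℝ) (h0 : p0 = β) (h1 : p1 = β ^ n) :
    |p0 - p1| = β - β ^ n ∧ ∀ m : ℕ, n < m → β - β ^ n < β - β ^ m := by
  obtain ⟨hb0, hb1⟩ := hβ
  have hlt : β ^ n < β := by
    calc β ^ n < β ^ 1 := pow_lt_pow_right_of_lt_one₀ hb0 hb1 (by omega)
    _ = β := pow_one β
  constructor
  · rw [h0, h1, abs_of_pos (by linarith)]
  · intro m hm
    have : β ^ m < β ^ n := pow_lt_pow_right_of_lt_one₀ hb0 hb1 hm
    linarith
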